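/- Let $M \geq 4$ and $\langle a \rangle_M = \sqrt{|a|^2+M^2}$, $\langle a \rangle = \sqrt{|a|^2+1}$. Fix $\rho \in \mathbb{R}^3$ and let $\nu_0 = \rho \frac{M}{M-1}$ (the unique point where $\nabla_\nu \phi_u(\rho, \cdot) = 0$ with $\phi_u(\rho,\nu) = \langle \rho \rangle - \langle \nu \rangle_M + \langle \rho - \nu \rangle$). Then there exists a universal constant $c > 0$ (independent of $M$ and $\rho$) such that for any $\eta \in \mathbb{R}^3$ with $\phi_u(\rho, \nu_0 + \eta) = 0$, one has $|\eta| \geq c\sqrt{M}$. In other words, $\mathrm{dist}(\{\nu : \phi_u(\rho,\nu) = 0\}, \{\nu_0\}) \geq c\sqrt{M}$. -/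

import Mathlib

noncomputable def jb (a : EuclideanSpace ℝ (Fin 3)) (m : ℝ) : ℝ :=
  Real.sqrt (‖a‖ ^ 2 + m ^ 2)

noncomputable def phiU (M : ℝ) (ρ ν : EuclideanSpace ℝ (Fin 3)) : ℝ :=
  jb ρ 1 - jb ν M + jb (ρ - ν) 1

set_option maxHeartbeats 1000000 in
theorem stmt6 : ∃ c : ℝ, 0 < c ∧ ∀ (M : ℝ), 4 ≤ M →
    ∀ ρ η : EuclideanSpace ℝ (Fin 3),
    phiU M ρ ((M / (M - 1)) • ρ + η) = 0 →
    c * Real.sqrt M ≤ ‖η‖ := by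
  refine ⟨1/2, by norm_num, ?_⟩
  intro M hM ρ η hphi
  have hM1 : (0:ℝ) < M - 1 := by linarith
  set k : ℝ := M / (M - 1) with hkdef
  have hk0 : 0 ≤ k := by positivity
  have hkd : k * (M - 1) = M := by
    rw [hkdef]; field_simp
  set ν : EuclideanSpace ℝ (Fin 3) := k • ρ + η with hν
  set r2 : ℝ := ‖ρ‖ ^ 2 with hr2
  set e : ℝ := ‖η‖ ^ 2 with he'
  set u : ℝ := inner ℝ ρ η with hu
  set a : ℝ := jb ρ 1 with haa
  set b : ℝ := jb (ρ - ν) 1 with hbb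
  set n : ℝ := jb ν M with hnn
  have ha : a ^ 2 = r2 + 1 := by
    rw [haa, jb, Real.sq_sqrt (by positivity)]; norm_num [hr2]
  have hb : b ^ 2 = ‖ρ - ν‖ ^ 2 + 1 := by
    rw [hbb, jb, Real.sq_sqrt (by positivity)]; norm_num
  have hn : n ^ 2 = ‖ν‖ ^ 2 + M ^ 2 := by
    rw [hnn, jb, Real.sq_sqrt (by positivity)]
  have ha0 : 0 ≤ a := Real.sqrt_nonneg _
  have hb0 : 0 ≤ b := Real.sqrt_nonneg _
  have hsum : n = a + b := by
    have : a - n + b = 0 := hphi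
    linarith
  have hν2 : ‖ν‖ ^ 2 = k ^ 2 * r2 + 2 * k * u + e := by
    rw [hν, norm_add_sq_real, real_inner_smul_left, norm_smul, Real.norm_eq_abs,
      abs_of_nonneg hk0, hr2, he', hu]
    ring
  have hpe : ρ - ν = (1 - k) • ρ - η := by
    rw [hν]; module
  have hp2 : ‖ρ - ν‖ ^ 2 = (1 - k) ^ 2 * r2 - 2 * (1 - k) * u + e := by
    rw [hpe, norm_sub_sq_real, real_inner_smul_left, norm_smul, Real.norm_eq_abs,
      mul_pow, sq_abs, hr2, he', hu]
    ring
  have hexp : k ^ 2 * r2 + 2 * k * u + e + M ^ 2 =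
      (r2 + 1) + (2 * a * b) + ((1 - k) ^ 2 * r2 - 2 * (1 - k) * u + e + 1) := by
    have h0 : n ^ 2 = a ^ 2 + 2 * a * b + b ^ 2 := by rw [hsum]; ring
    rw [ha, hb, hn, hν2, hp2] at h0
    linarith
  have h2 : (M - 1) * (2 * a * b) = 2 * r2 + 2 * (M - 1) * u + (M - 1) * (M ^ 2 - 2) := by
    linear_combination (-(M - 1)) * hexp + 2 * r2 * hkd
  have h1 : 2 * (M - 1) * a * b ≤ a ^ 2 + (M - 1) ^ 2 * b ^ 2 := by
    nlinarith [sq_nonneg (a - (M - 1) * b)]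
  have h3 : a ^ 2 + (M - 1) ^ 2 * b ^ 2
      = 2 * r2 + 2 * (M - 1) * u + 1 + (M - 1) ^ 2 * (e + 1) := by
    rw [ha, hb, hp2]
    linear_combination (((M - 1) * k - M + 2) * r2 + 2 * (M - 1) * u) * hkd
  have he : M / 4 ≤ e := by
    nlinarith [h1, h2, h3, hM, sq_nonneg (M - 1), mul_pos hM1 hM1]
  have hs : Real.sqrt M ^ 2 = M := Real.sq_sqrt (by linarith)
  have hs0 : 0 ≤ Real.sqrt M := Real.sqrt_nonneg M
  nlinarith [he, hs, hs0, norm_nonneg η, sq_nonneg (‖η‖ - Real.sqrt M / 2)]
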